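/- arXiv:0905.2370 — 4 statements merged into one kernel-verified Lean document; each statement's English description precedes it below -/
import Mathlib

section
/- (Wiener's lemma consequence) For a finite continuous (atomless) Borel measure μ on the unit circle, there exists a set A of natural numbers of natural density 1 such that the Fourier coefficients μ̂(k) = ∫ z^k dμ(z) tend to 0 as k → ∞ along A. -/
open MeasureTheory Filter

noncomputable instance : MeasurableSpace Circle := borel Circle
instance : BorelSpace Circle := ⟨rfl⟩

/-- `A ⊆ ℕ` has natural density 1. -/
def HasDensityOne (A : Set ℕ) : Prop :=
  Tendsto (fun N : ℕ => (Nat.card ↑(A ∩ Set.Iio N) : ℝ) / N) atTop (nhds 1)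

open Finset in
theorem kvn (a : ℕ → ℝ) (ha : ∀ k, 0 ≤ a k)
    (hc : Tendsto (fun N : ℕ => (∑ k ∈ Finset.range N, a k) / N) atTop (nhds 0)) :
    ∃ A : Set ℕ, HasDensityOne A ∧ Tendsto a (atTop ⊓ 𝓟 A) (nhds 0) := by
  classical
  set cnt : ℕ → ℕ → ℕ := fun m n => ((Finset.range n).filter (fun k => 1/(m+1:ℝ) ≤ a k)).card
    with hcnt
  have key : ∀ m n : ℕ, (cnt m n : ℝ) * (1/(m+1)) ≤ ∑ k ∈ Finset.range n, a k := by
    intro m n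
    have h1 : (cnt m n : ℝ) * (1/(m+1)) = (cnt m n) • (1/(m+1:ℝ)) := by simp [nsmul_eq_mul]
    rw [h1]
    calc (cnt m n) • (1/(m+1:ℝ))
        ≤ ∑ k ∈ (range n).filter (fun k => 1/(m+1:ℝ) ≤ a k), a k :=
          Finset.card_nsmul_le_sum _ _ _ (fun x hx => (Finset.mem_filter.mp hx).2)
      _ ≤ ∑ k ∈ range n, a k :=
          Finset.sum_le_sum_of_subset_of_nonneg (filter_subset _ _) (fun i _ _ => ha i)
  have hT : ∀ m : ℕ, ∃ T : ℕ, ∀ n, T ≤ n → (cnt m n : ℝ) ≤ n * (1/(m+1)) := by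
    intro m
    have hmpos : (0:ℝ) < 1/(m+1) := by positivity
    have hev : ∀ᶠ n : ℕ in atTop, ‖(∑ k ∈ Finset.range n, a k) / n‖ < (1/(m+1))^2 :=
      (NormedAddCommGroup.tendsto_nhds_zero.mp hc) ((1/(m+1))^2) (by positivity)
    rw [eventually_atTop] at hev
    obtain ⟨T, hTv⟩ := hev
    refine ⟨max T 1, fun n hn => ?_⟩
    have hn1 : 1 ≤ n := le_trans (le_max_right _ _) hn
    have hnpos : (0:ℝ) < n := by exact_mod_cast hn1
    have h2 := hTv n (le_trans (le_max_left _ _) hn)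
    rw [Real.norm_eq_abs] at h2
    have hS : (∑ k ∈ Finset.range n, a k) ≤ n * (1/(m+1))^2 := by
      have := abs_lt.mp h2
      have h3 : (∑ k ∈ Finset.range n, a k) / n ≤ (1/(m+1))^2 := le_of_lt this.2
      calc (∑ k ∈ Finset.range n, a k) = ((∑ k ∈ Finset.range n, a k)/n) * n := by
            field_simp
        _ ≤ (1/(m+1))^2 * n := by gcongr
        _ = n * (1/(m+1))^2 := by ring
    have h4 := key m n
    nlinarith [h4, hS, hmpos]
  choose T hT' using hT
  set M : ℕ → ℕ := fun m => m + (Finset.range (m+1)).sup T with hM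
  have hMmono : StrictMono M := by
    intro i j hij
    have hsup : (range (i+1)).sup T ≤ (range (j+1)).sup T :=
      Finset.sup_mono (Finset.range_subset_range.mpr (by omega))
    simp only [hM]
    omega
  have hMT : ∀ m, T m ≤ M m := by
    intro m
    have h6 : T m ≤ (Finset.range (m+1)).sup T :=
      Finset.le_sup (mem_range.mpr (Nat.lt_succ_self m))
    exact le_trans h6 (Nat.le_add_left _ _)
  set A : Set ℕ := {k | ∀ j, M j ≤ k → a k < 1/(j+1)} with hA
  set dcnt : ℕ → ℕ := fun n => ((range n).filter (fun k => k ∉ A)).card with hdcnt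
  have hcompl : ∀ m n : ℕ, M m ≤ n → (dcnt n : ℝ) ≤ n * (1/(m+1)) := by
    intro m n hmn
    set m' := Nat.findGreatest (fun j => M j ≤ n) n with hm'
    have hmm' : m ≤ m' := Nat.le_findGreatest (le_trans hMmono.le_apply hmn) hmn
    have hPm' : M m' ≤ n := Nat.findGreatest_spec (P := fun j => M j ≤ n) (le_trans hMmono.le_apply hmn) hmn
    have hsubset : (range n).filter (fun k => k ∉ A)
        ⊆ (range n).filter (fun k => 1/(m'+1:ℝ) ≤ a k) := by
      intro k hk
      rw [mem_filter] at hk ⊢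
      obtain ⟨hkn, hkA⟩ := hk
      simp only [hA, Set.mem_setOf_eq, not_forall, not_lt] at hkA
      obtain ⟨j, hjk, hja⟩ := hkA
      have hjn : M j ≤ n := le_trans hjk (le_of_lt (mem_range.mp hkn))
      have hjm' : j ≤ m' := Nat.le_findGreatest (le_trans hMmono.le_apply hjn) hjn
      refine ⟨hkn, le_trans ?_ hja⟩
      apply one_div_le_one_div_of_le (by positivity)
      have : (j:ℝ) ≤ m' := by exact_mod_cast hjm'
      linarith
    have h1 : (dcnt n : ℝ) ≤ cnt m' n := by
      have := Finset.card_le_card hsubset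
      simp only [hdcnt, hcnt]
      exact_mod_cast this
    have h2 : (cnt m' n : ℝ) ≤ n * (1/(m'+1)) := hT' m' n (le_trans (hMT m') hPm')
    have h3 : (n:ℝ) * (1/(m'+1)) ≤ n * (1/(m+1)) := by
      have hmc : (m:ℝ) ≤ m' := by exact_mod_cast hmm'
      exact mul_le_mul_of_nonneg_left
        (one_div_le_one_div_of_le (by positivity) (by linarith)) (Nat.cast_nonneg n)
    linarith
  have hd0 : Tendsto (fun n : ℕ => (dcnt n : ℝ)/n) atTop (nhds 0) := by
    rw [NormedAddCommGroup.tendsto_nhds_zero]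
    intro ε hε
    obtain ⟨m, hm⟩ := exists_nat_one_div_lt hε
    filter_upwards [eventually_ge_atTop (M m), eventually_ge_atTop 1] with n hn hn1
    have hb := hcompl m n hn
    have hnpos : (0:ℝ) < n := by exact_mod_cast hn1
    rw [Real.norm_eq_abs, abs_of_nonneg (by positivity)]
    calc (dcnt n:ℝ)/n ≤ (n * (1/(m+1)))/n := by gcongr
      _ = 1/(m+1) := by field_simp
      _ < ε := hm
  have hdle : ∀ n, dcnt n ≤ n := by
    intro n
    calc dcnt n ≤ (range n).card := Finset.card_le_card (filter_subset _ _)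
      _ = n := card_range n
  have hcard : ∀ n : ℕ, (Nat.card ↑(A ∩ Set.Iio n) : ℝ) = n - dcnt n := by
    intro n
    have hset : A ∩ Set.Iio n = ↑((range n).filter (fun k => k ∈ A)) := by
      ext k
      simp only [Set.mem_inter_iff, Set.mem_Iio, Finset.coe_filter, Set.mem_setOf_eq,
        Finset.mem_range]
      tauto
    rw [Nat.card_coe_set_eq, hset, Set.ncard_coe_finset]
    have hsplit := Finset.card_filter_add_card_filter_not
      (s := range n) (p := fun k => k ∈ A)
    rw [card_range] at hsplit
    have h5 : ((range n).filter (fun k => k ∈ A)).card = n - dcnt n := by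
      simp only [hdcnt] at *
      omega
    rw [h5]
    have := hdle n
    push_cast [Nat.cast_sub this]
    ring
  have hdens : HasDensityOne A := by
    unfold HasDensityOne
    have heq : ∀ᶠ n : ℕ in atTop,
        (1 - (dcnt n : ℝ)/n) = (Nat.card ↑(A ∩ Set.Iio n) : ℝ) / n := by
      filter_upwards [eventually_ge_atTop 1] with n hn
      have hnpos : (0:ℝ) < n := by exact_mod_cast hn
      rw [hcard n]
      field_simp
    have : Tendsto (fun n : ℕ => 1 - (dcnt n : ℝ)/n) atTop (nhds 1) := by
      have := tendsto_const_nhds (x := (1:ℝ)) (f := atTop (α := ℕ)) |>.sub hd0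
      simpa using this
    exact this.congr' heq
  refine ⟨A, hdens, ?_⟩
  rw [NormedAddCommGroup.tendsto_nhds_zero]
  intro ε hε
  obtain ⟨j, hj⟩ := exists_nat_one_div_lt hε
  rw [eventually_inf_principal]
  filter_upwards [eventually_ge_atTop (M j)] with k hk hkA
  have hlt := hkA j hk
  rw [Real.norm_eq_abs, abs_of_nonneg (ha k)]
  linarith

open Finset in
theorem wiener (μ : Measure Circle) [IsFiniteMeasure μ]
    (hcont : ∀ z : Circle, μ {z} = 0) :
    Tendsto (fun N : ℕ =>
      (∑ k ∈ Finset.range N, ‖∫ z : Circle, (z : ℂ) ^ k ∂μ‖^2) / N) atTop (nhds 0) := by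
  set c : ℕ → ℂ := fun k => ∫ z : Circle, (z : ℂ) ^ k ∂μ with hc
  set g : Circle × Circle → ℂ := fun p => (p.1 : ℂ) * (starRingEnd ℂ) (p.2 : ℂ) with hg
  have hgcont : Continuous g :=
    (continuous_subtype_val.comp continuous_fst).mul
      (Complex.continuous_conj.comp (continuous_subtype_val.comp continuous_snd))
  have hgnorm : ∀ p, ‖g p‖ = 1 := by
    intro p
    simp [hg, norm_mul, Circle.norm_coe]
  have hint : ∀ k : ℕ, Integrable (fun p => g p ^ k) (μ.prod μ) :=
    fun k => (hgcont.pow k).integrable_of_hasCompactSupport (HasCompactSupport.of_compactSpace _)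
  have hkey : ∀ k : ℕ, ((‖c k‖^2 : ℝ) : ℂ) = ∫ p, g p ^ k ∂(μ.prod μ) := by
    intro k
    have h1 : ((‖c k‖^2 : ℝ) : ℂ) = c k * (starRingEnd ℂ) (c k) := by
      rw [Complex.mul_conj]
      norm_cast
      rw [Complex.normSq_eq_norm_sq]
    have h2 : (starRingEnd ℂ) (c k) = ∫ w : Circle, (starRingEnd ℂ) ((w:ℂ)^k) ∂μ :=
      integral_conj.symm
    rw [h1, h2, hc]
    rw [← integral_prod_mul (fun z : Circle => (z:ℂ)^k)
      (fun w : Circle => (starRingEnd ℂ) ((w:ℂ)^k))]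
    congr 1
    ext p
    simp only [hg, map_pow, mul_pow]
  have hdiag : (μ.prod μ) {p : Circle × Circle | p.1 = p.2} = 0 := by
    have hD : MeasurableSet {p : Circle × Circle | p.1 = p.2} :=
      (isClosed_eq continuous_fst continuous_snd).measurableSet
    rw [Measure.prod_apply hD]
    have hfib : ∀ z : Circle, (Prod.mk z ⁻¹' {p : Circle × Circle | p.1 = p.2}) = {z} := by
      intro z; ext w; simp [eq_comm]
    simp [hfib, hcont]
  have hae : ∀ᵐ p ∂(μ.prod μ), p.1 ≠ p.2 := by
    rw [ae_iff]
    simpa [not_not] using hdiag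
  have hlim : ∀ᵐ p ∂(μ.prod μ),
      Tendsto (fun N : ℕ => (N:ℂ)⁻¹ * ∑ k ∈ Finset.range N, g p ^ k) atTop (nhds 0) := by
    filter_upwards [hae] with p hp
    have hg1 : g p ≠ 1 := by
      intro h
      apply hp
      have hw : (p.2:ℂ) * (starRingEnd ℂ) (p.2:ℂ) = 1 := by
        rw [Complex.mul_conj]
        norm_cast
        simp [Complex.normSq_eq_norm_sq, Circle.norm_coe]
      have hne : (starRingEnd ℂ) (p.2:ℂ) ≠ 0 := by
        simp only [ne_eq, map_eq_zero]
        intro h0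
        have h1 := Circle.norm_coe p.2
        rw [h0] at h1
        simp at h1
      exact Subtype.ext (mul_right_cancel₀ hne (h.trans hw.symm))
    apply squeeze_zero_norm' (a := fun N : ℕ => (N:ℝ)⁻¹ * (2 / ‖g p - 1‖))
    · refine Eventually.of_forall (fun N => ?_)
      rw [geom_sum_eq hg1, norm_mul, norm_inv, norm_div]
      have hnum : ‖g p ^ N - 1‖ ≤ 2 := by
        calc ‖g p ^ N - 1‖ ≤ ‖g p ^ N‖ + ‖(1:ℂ)‖ := norm_sub_le _ _
          _ = 2 := by rw [norm_pow, hgnorm]; norm_num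
      have : ‖((N:ℂ))‖ = (N:ℝ) := by simp
      rw [this]
      gcongr
    · have h0 := tendsto_inv_atTop_nhds_zero_nat (𝕜 := ℝ)
      simpa using h0.mul_const (2 / ‖g p - 1‖)
  have hmeas : ∀ N : ℕ, AEStronglyMeasurable
      (fun p => (N:ℂ)⁻¹ * ∑ k ∈ Finset.range N, g p ^ k) (μ.prod μ) := by
    intro N
    exact (continuous_const.mul
      (continuous_finset_sum _ fun k _ => hgcont.pow k)).aestronglyMeasurable
  have hbound : ∀ N : ℕ, ∀ᵐ p ∂(μ.prod μ),
      ‖(N:ℂ)⁻¹ * ∑ k ∈ Finset.range N, g p ^ k‖ ≤ 1 := by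
    intro N
    refine Eventually.of_forall (fun p => ?_)
    rcases Nat.eq_zero_or_pos N with h0 | hpos
    · simp [h0]
    · have hNpos : (0:ℝ) < N := by exact_mod_cast hpos
      rw [norm_mul, norm_inv]
      have h1 : ‖((N:ℂ))‖ = (N:ℝ) := by simp
      rw [h1]
      have h2 : ‖∑ k ∈ Finset.range N, g p ^ k‖ ≤ N := by
        calc ‖∑ k ∈ Finset.range N, g p ^ k‖ ≤ ∑ k ∈ Finset.range N, ‖g p ^ k‖ :=
              norm_sum_le _ _
          _ = N := by simp [norm_pow, hgnorm]
      calc (N:ℝ)⁻¹ * ‖∑ k ∈ Finset.range N, g p ^ k‖ ≤ (N:ℝ)⁻¹ * N := by gcongr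
        _ = 1 := inv_mul_cancel₀ (ne_of_gt hNpos)
  have hDCT := tendsto_integral_of_dominated_convergence (F := fun N : ℕ =>
      fun p => (N:ℂ)⁻¹ * ∑ k ∈ Finset.range N, g p ^ k) (f := fun _ => (0:ℂ))
      (fun _ => (1:ℝ)) hmeas (integrable_const 1) hbound hlim
  simp only [integral_zero] at hDCT
  have hid : ∀ N : ℕ, (∑ k ∈ Finset.range N, ‖c k‖^2) / N
      = (∫ p, (N:ℂ)⁻¹ * ∑ k ∈ Finset.range N, g p ^ k ∂(μ.prod μ)).re := by
    intro N
    rw [integral_const_mul, integral_finset_sum _ (fun k _ => hint k)]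
    have hsum : ∑ k ∈ Finset.range N, ∫ p, g p ^ k ∂(μ.prod μ)
        = ((∑ k ∈ Finset.range N, ‖c k‖^2 : ℝ) : ℂ) := by
      rw [Complex.ofReal_sum]
      exact Finset.sum_congr rfl fun k _ => (hkey k).symm
    rw [hsum]
    have : ((N:ℂ))⁻¹ * ((∑ k ∈ Finset.range N, ‖c k‖^2 : ℝ) : ℂ)
        = (((∑ k ∈ Finset.range N, ‖c k‖^2) / N : ℝ) : ℂ) := by
      push_cast
      ring
    rw [this, Complex.ofReal_re]
  have := (Complex.continuous_re.tendsto 0).comp hDCT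
  simp only [Complex.zero_re] at this
  exact this.congr fun N => (hid N).symm

/-- For a finite continuous (atomless) Borel measure `μ` on the unit circle, there is a
set `A ⊆ ℕ` of density 1 along which the Fourier coefficients `μ̂(k) = ∫ z^k dμ` tend
to `0`. -/
theorem stmt1 (μ : Measure Circle) [IsFiniteMeasure μ]
    (hcont : ∀ z : Circle, μ {z} = 0) :
    ∃ A : Set ℕ, HasDensityOne A ∧
      Tendsto (fun k : ℕ => ∫ z : Circle, (z : ℂ) ^ k ∂μ) (atTop ⊓ 𝓟 A) (nhds 0) := by
  set c : ℕ → ℂ := fun k => ∫ z : Circle, (z : ℂ) ^ k ∂μ with hc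
  obtain ⟨A, hA, htend⟩ := kvn (fun k => ‖c k‖^2) (fun k => by positivity) (wiener μ hcont)
  refine ⟨A, hA, ?_⟩
  have h2 : Tendsto (fun k => ‖c k‖) (atTop ⊓ 𝓟 A) (nhds 0) := by
    have h1 := (Real.continuous_sqrt.tendsto 0).comp htend
    rw [Real.sqrt_zero] at h1
    exact h1.congr fun k => by
      simp only [Function.comp_apply]
      exact Real.sqrt_sq (norm_nonneg _)
  exact tendsto_zero_iff_norm_tendsto_zero.mpr h2
end

section
/- (Wiener's lemma) For a finite Borel measure μ on the unit circle, the Cesàro averages (1/n) ∑_{k=0}^{n-1} |μ̂(k)|² converge to 0 as n → ∞ if and only if μ is continuous (atomless). -/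
open MeasureTheory Filter
open Complex ComplexConjugate

-- Cesàro averages of powers of a unimodular number
lemma cesaro_unimodular (u : ℂ) (hu : ‖u‖ = 1) :
    Tendsto (fun n : ℕ => (n : ℂ)⁻¹ * ∑ k ∈ Finset.range n, u ^ k) atTop
      (nhds (if u = 1 then 1 else 0)) := by
  rcases eq_or_ne u 1 with h | h
  · simp only [h, if_pos rfl, one_pow, Finset.sum_const, Finset.card_range, nsmul_eq_mul, mul_one]
    have : ∀ᶠ n : ℕ in atTop, (n : ℂ)⁻¹ * (n : ℂ) = 1 := by
      filter_upwards [eventually_ge_atTop 1] with n hn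
      have : (n : ℂ) ≠ 0 := Nat.cast_ne_zero.2 (by omega)
      field_simp
    exact Tendsto.congr' (by filter_upwards [this] with n hn using hn.symm) tendsto_const_nhds
  · rw [if_neg h]
    apply squeeze_zero_norm (a := fun n : ℕ => 2 / ‖u - 1‖ * (1 / (n : ℝ)))
    · intro n
      rw [geom_sum_eq h]
      rw [norm_mul]
      have h1 : ‖(n : ℂ)⁻¹‖ = 1 / (n : ℝ) := by
        simp [norm_inv]
      have h2 : ‖(u ^ n - 1) / (u - 1)‖ ≤ 2 / ‖u - 1‖ := by
        rw [norm_div]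
        have hden : 0 < ‖u - 1‖ := by
          simpa using norm_pos_iff.2 (sub_ne_zero.2 h)
        have hnum : ‖u ^ n - 1‖ ≤ 2 := by
          calc ‖u ^ n - 1‖ ≤ ‖u ^ n‖ + ‖(1:ℂ)‖ :=
                norm_sub_le _ _
            _ = 2 := by rw [norm_pow, hu, one_pow, norm_one]; norm_num
        gcongr
      calc ‖(n:ℂ)⁻¹‖ * ‖(u ^ n - 1) / (u - 1)‖
          ≤ (1 / (n:ℝ)) * (2 / ‖u - 1‖) := by
            rw [h1]; exact mul_le_mul_of_nonneg_left h2 (by positivity)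
        _ = 2 / ‖u - 1‖ * (1 / (n:ℝ)) := by ring
    · have := tendsto_one_div_atTop_nhds_zero_nat (𝕜 := ℝ)
      simpa using (tendsto_const_nhds (x := 2 / ‖u - 1‖)).mul this

lemma wiener_main (μ : Measure Circle) [IsFiniteMeasure μ] :
    Tendsto
      (fun n : ℕ => (1 / (n : ℝ)) * ∑ k ∈ Finset.range n, ‖∫ z : Circle, (z : ℂ) ^ k ∂μ‖ ^ 2)
      atTop (nhds ((μ.prod μ) {p : Circle × Circle | p.1 = p.2}).toReal) := by
  set D : Set (Circle × Circle) := {p : Circle × Circle | p.1 = p.2} with hD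
  have hDclosed : IsClosed D := isClosed_eq continuous_fst continuous_snd
  have hDmeas : MeasurableSet D := hDclosed.measurableSet
  set f : ℕ → Circle × Circle → ℂ :=
    fun n p => (n : ℂ)⁻¹ * ∑ k ∈ Finset.range n, ((p.2 : ℂ) * conj (p.1 : ℂ)) ^ k with hf
  have hcontc : Continuous (fun z : Circle => (z : ℂ)) := continuous_subtype_val
  have hcontk : ∀ k : ℕ, Continuous (fun p : Circle × Circle => ((p.2 : ℂ) * conj (p.1 : ℂ)) ^ k) :=
    fun k => (((hcontc.comp continuous_snd).mul
      (Complex.continuous_conj.comp (hcontc.comp continuous_fst)))).pow k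
  have hcont : ∀ n, Continuous (f n) := fun n =>
    continuous_const.mul (continuous_finset_sum _ fun k _ => hcontk k)
  have habs : ∀ p : Circle × Circle, ‖(p.2 : ℂ) * conj (p.1 : ℂ)‖ = 1 := by
    intro p; simp [Circle.norm_coe]
  have hbound : ∀ n, ∀ p : Circle × Circle, ‖f n p‖ ≤ 1 := by
    intro n p
    rcases Nat.eq_zero_or_pos n with h | h
    · simp [hf, h]
    calc ‖f n p‖ ≤ ‖(n : ℂ)⁻¹‖ * ∑ k ∈ Finset.range n, ‖((p.2 : ℂ) * conj (p.1 : ℂ)) ^ k‖ := by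
          rw [hf, norm_mul]
          exact mul_le_mul_of_nonneg_left (norm_sum_le _ _) (norm_nonneg _)
      _ = 1 := by
          simp only [norm_pow, habs, one_pow, Finset.sum_const,
            Finset.card_range, smul_eq_mul, mul_one]
          have : (n : ℝ) ≠ 0 := Nat.cast_ne_zero.2 (by omega)
          simp [norm_inv, this]
  -- pointwise limit
  have hlim : ∀ p : Circle × Circle,
      Tendsto (fun n => f n p) atTop (nhds (D.indicator (fun _ => (1 : ℂ)) p)) := by
    intro p
    have := cesaro_unimodular ((p.2 : ℂ) * conj (p.1 : ℂ)) (habs p)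
    have heq : ((p.2 : ℂ) * conj (p.1 : ℂ) = 1) ↔ p ∈ D := by
      rw [← Circle.coe_inv_eq_conj, ← Circle.coe_mul, Circle.coe_eq_one,
        mul_inv_eq_one]
      exact ⟨fun h => h.symm, fun h => h.symm⟩
    rcases Classical.em (p ∈ D) with h | h
    · simpa [hf, Set.indicator_of_mem h, heq.2 h] using this
    · have hne : ¬ ((p.2 : ℂ) * conj (p.1 : ℂ) = 1) := fun hc => h (heq.1 hc)
      rw [if_neg hne] at this
      simpa [hf, Set.indicator_of_notMem h] using this
  -- dominated convergence
  have hint : Tendsto (fun n => ∫ p, f n p ∂(μ.prod μ)) atTop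
      (nhds (∫ p, D.indicator (fun _ => (1 : ℂ)) p ∂(μ.prod μ))) := by
    apply tendsto_integral_of_dominated_convergence (fun _ => (1 : ℝ))
    · exact fun n => (hcont n).aestronglyMeasurable
    · exact integrable_const 1
    · exact fun n => Filter.Eventually.of_forall (hbound n)
    · exact Filter.Eventually.of_forall hlim
  have hval : (∫ p, D.indicator (fun _ => (1 : ℂ)) p ∂(μ.prod μ))
      = (((μ.prod μ) D).toReal : ℂ) := by
    rw [integral_indicator hDmeas, setIntegral_const]
    simp
    rfl
  -- identify the integral with the Cesàro average
  have hkey : ∀ n : ℕ, (((1 / (n : ℝ)) * ∑ k ∈ Finset.range n,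
      ‖∫ z : Circle, (z : ℂ) ^ k ∂μ‖ ^ 2 : ℝ) : ℂ) = ∫ p, f n p ∂(μ.prod μ) := by
    intro n
    have hintk : ∀ k : ℕ, Integrable (fun p : Circle × Circle =>
        ((p.2 : ℂ) * conj (p.1 : ℂ)) ^ k) (μ.prod μ) := by
      intro k
      refine Integrable.mono' (integrable_const 1) (hcontk k).aestronglyMeasurable ?_
      refine Filter.Eventually.of_forall fun p => ?_
      simp [norm_pow, habs p, Circle.norm_coe]
    have step1 : ∫ p, f n p ∂(μ.prod μ)
        = (n : ℂ)⁻¹ * ∑ k ∈ Finset.range n,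
            ∫ p, ((p.2 : ℂ) * conj (p.1 : ℂ)) ^ k ∂(μ.prod μ) := by
      rw [hf]
      simp only
      rw [integral_const_mul, integral_finset_sum _ (fun k _ => hintk k)]
    have step2 : ∀ k : ℕ, ∫ p, ((p.2 : ℂ) * conj (p.1 : ℂ)) ^ k ∂(μ.prod μ)
        = ((‖∫ z : Circle, (z : ℂ) ^ k ∂μ‖ ^ 2 : ℝ) : ℂ) := by
      intro k
      rw [integral_prod _ (hintk k)]
      have inner : ∀ w : Circle, (∫ z : Circle, ((z : ℂ) * conj (w : ℂ)) ^ k ∂μ)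
          = (∫ z : Circle, (z : ℂ) ^ k ∂μ) * conj ((w : ℂ) ^ k) := by
        intro w
        rw [show (fun z : Circle => ((z : ℂ) * conj (w : ℂ)) ^ k)
            = fun z : Circle => (z : ℂ) ^ k * conj (w : ℂ) ^ k from
          funext fun z => mul_pow _ _ _]
        rw [integral_mul_const, ← map_pow]
      simp only [inner]
      rw [integral_const_mul, integral_conj, Complex.mul_conj']
      exact (Complex.ofReal_pow _ _).symm
    rw [step1]
    simp only [step2]
    push_cast
    ring
  have hC : Tendsto (fun n : ℕ => (((1 / (n : ℝ)) * ∑ k ∈ Finset.range n,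
      ‖∫ z : Circle, (z : ℂ) ^ k ∂μ‖ ^ 2 : ℝ) : ℂ)) atTop (nhds (((μ.prod μ) D).toReal : ℂ)) := by
    rw [funext hkey, ← hval]
    exact hint
  have hR := (Complex.continuous_re.tendsto _).comp hC
  simpa only [Function.comp_def, Complex.ofReal_re] using hR

/-- Wiener's lemma: for a finite Borel measure `μ` on the unit circle, the Cesàro
averages `(1/n) ∑_{k<n} |μ̂(k)|²` tend to `0` iff `μ` is continuous (atomless). -/
theorem stmt2 (μ : Measure Circle) [IsFiniteMeasure μ] :
    Tendsto
      (fun n : ℕ => (1 / (n : ℝ)) * ∑ k ∈ Finset.range n, ‖∫ z : Circle, (z : ℂ) ^ k ∂μ‖ ^ 2)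
      atTop (nhds 0)
    ↔ ∀ z : Circle, μ {z} = 0 := by
  have hDmeas : MeasurableSet {p : Circle × Circle | p.1 = p.2} :=
    (isClosed_eq continuous_fst continuous_snd).measurableSet
  have hprod : (μ.prod μ) {p : Circle × Circle | p.1 = p.2} = ∫⁻ x, μ {x} ∂μ := by
    rw [Measure.prod_apply hDmeas]
    congr 1
    funext x
    congr 1
    ext y
    simp [eq_comm]
  constructor
  · intro h z
    have h0 : (0 : ℝ) = ((μ.prod μ) {p : Circle × Circle | p.1 = p.2}).toReal :=
      tendsto_nhds_unique h (wiener_main μ)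
    have hmeas0 : (μ.prod μ) {p : Circle × Circle | p.1 = p.2} = 0 := by
      have hfin : (μ.prod μ) {p : Circle × Circle | p.1 = p.2} ≠ ⊤ := measure_ne_top _ _
      exact (ENNReal.toReal_eq_zero_iff _).1 h0.symm |>.resolve_right hfin
    rw [hprod] at hmeas0
    by_contra hz
    have hpt : ∀ x, Set.indicator ({z} : Set Circle) (fun _ => μ {z}) x ≤ μ {x} := by
      intro x
      by_cases hx : x ∈ ({z} : Set Circle)
      · rw [Set.indicator_of_mem hx]
        rw [Set.mem_singleton_iff.1 hx]
      · simp [Set.indicator_of_notMem hx]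
    have hlb : μ {z} * μ {z} ≤ ∫⁻ x, μ {x} ∂μ := by
      have := lintegral_mono hpt (μ := μ)
      rwa [lintegral_indicator (measurableSet_singleton z), setLIntegral_const] at this
    rw [hmeas0, le_zero_iff, mul_eq_zero, or_self] at hlb
    exact hz hlb
  · intro h
    have hmeas0 : (μ.prod μ) {p : Circle × Circle | p.1 = p.2} = 0 := by
      rw [hprod]; simp [h]
    have := wiener_main μ
    rw [hmeas0] at this
    simpa using this
end

section
/- If two finite Borel measures μ and ν on the unit circle and a sequence of natural numbers (n_i) satisfy: z^{n_i} → 1 in L²(ν), and ∫ z^{n_i} f dμ → 0 for every bounded measurable f, then μ and ν are mutually singular. -/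
open MeasureTheory Filter
open scoped ENNReal NNReal

lemma norm_sq_sub_one_aux {w : ℂ} (hw : ‖w‖ = 1) : ‖w - 1‖ ^ 2 = 2 - 2 * w.re := by
  have h1 : w.re * w.re + w.im * w.im = 1 := by
    have : ‖w‖ ^ 2 = 1 := by rw [hw]; norm_num
    rwa [Complex.sq_norm, Complex.normSq_apply] at this
  have h2 : ‖w - 1‖ ^ 2 = (w.re - 1) * (w.re - 1) + w.im * w.im := by
    rw [Complex.sq_norm, Complex.normSq_apply]
    simp [Complex.sub_re, Complex.sub_im]
  rw [h2]; nlinarith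

lemma circle_norm_pow (z : Circle) (m : ℕ) : ‖(z : ℂ) ^ m‖ = 1 := by
  rw [norm_pow]
  rw [Circle.norm_coe, one_pow]

lemma circle_pow_measurable (m : ℕ) : Measurable (fun z : Circle => (z : ℂ) ^ m) := by
  have h : Continuous (fun z : Circle => (z : ℂ) ^ m) := continuous_subtype_val.pow m
  exact h.measurable

/-- If finite Borel measures `μ, ν` on the unit circle and a sequence `(n i)` satisfy
`z^{n i} → 1` in `L²(ν)` and `∫ z^{n i} f dμ → 0` for every bounded measurable `f`,
then `μ` and `ν` are mutually singular. -/
theorem stmt3 (μ ν : Measure Circle) [IsFiniteMeasure μ] [IsFiniteMeasure ν]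
    (n : ℕ → ℕ)
    (hν : Tendsto (fun i => ∫ z : Circle, ‖(z : ℂ) ^ (n i) - 1‖ ^ 2 ∂ν) atTop (nhds 0))
    (hμ : ∀ f : Circle → ℂ, Measurable f → (∃ M : ℝ, ∀ z, ‖f z‖ ≤ M) →
      Tendsto (fun i => ∫ z : Circle, (z : ℂ) ^ (n i) * f z ∂μ) atTop (nhds 0)) :
    μ ⟂ₘ ν := by
  set ρ : Measure Circle := μ.withDensity (ν.rnDeriv μ) with hρdef
  have hρle : ρ ≤ ν := Measure.withDensity_rnDeriv_le ν μ
  haveI : IsFiniteMeasure ρ := isFiniteMeasure_of_le ν hρle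
  suffices hρ0 : ρ = 0 by
    have hsing : ν.singularPart μ = ν := by
      conv_rhs => rw [← Measure.singularPart_add_rnDeriv ν μ]
      rw [← hρdef, hρ0, add_zero]
    have := Measure.mutuallySingular_singularPart ν μ
    rw [hsing] at this
    exact this.symm
  -- the density and its real version
  set G : Circle → ℝ := fun z => (ν.rnDeriv μ z).toReal with hGdef
  have hGmeas : Measurable G := (Measure.measurable_rnDeriv ν μ).ennreal_toReal
  have hGint : Integrable G μ := Measure.integrable_toReal_rnDeriv
  have hG0 : ∀ z, 0 ≤ G z := fun z => ENNReal.toReal_nonneg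
  -- express integrals against ρ as integrals against μ with density G
  have hρint : ∀ φ : Circle → ℂ, Measurable φ →
      ∫ z, φ z ∂ρ = ∫ z, (G z : ℂ) * φ z ∂μ := by
    intro φ hφ
    have hfin : ∀ᵐ z ∂μ, ν.rnDeriv μ z < ⊤ := Measure.rnDeriv_lt_top ν μ
    have hcongr : ρ = μ.withDensity (fun z => ((ν.rnDeriv μ z).toNNReal : ℝ≥0∞)) := by
      rw [hρdef]
      refine withDensity_congr_ae ?_
      filter_upwards [hfin] with z hz
      rw [ENNReal.coe_toNNReal hz.ne]
    rw [hcongr, integral_withDensity_eq_integral_smul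
      ((Measure.measurable_rnDeriv ν μ).ennreal_toNNReal) φ]
    refine integral_congr_ae (Eventually.of_forall fun z => ?_)
    show (ν.rnDeriv μ z).toNNReal • φ z = (G z : ℂ) * φ z
    rw [NNReal.smul_def, Complex.real_smul]
    rfl
  -- integrability facts
  have hbdd_int : ∀ (m : ℕ) (σ : Measure Circle) [IsFiniteMeasure σ],
      Integrable (fun z : Circle => (z : ℂ) ^ m) σ := by
    intro m σ _
    refine Integrable.mono' (integrable_const (1 : ℝ))
      (circle_pow_measurable m).aestronglyMeasurable
      (Eventually.of_forall fun z => ?_)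
    rw [circle_norm_pow]
  have hGmul_int : ∀ m : ℕ, Integrable (fun z : Circle => (z : ℂ) ^ m * (G z : ℂ)) μ := by
    intro m
    refine Integrable.mono' hGint
      (((circle_pow_measurable m).mul (Complex.measurable_ofReal.comp hGmeas)).aestronglyMeasurable)
      (Eventually.of_forall fun z => ?_)
    rw [norm_mul, circle_norm_pow, one_mul, Complex.norm_real, Real.norm_eq_abs,
      abs_of_nonneg (hG0 z)]
  -- Step 1 : ∫ z^{n i} dρ → 0
  have hT : Tendsto (fun i => ∫ z, (z : ℂ) ^ (n i) ∂ρ) atTop (nhds 0) := by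
    rw [NormedAddCommGroup.tendsto_nhds_zero]
    intro ε hε
    -- truncation error
    set E : ℕ → ℝ := fun N => ∫ z, (G z - min (G z) N) ∂μ with hEdef
    have hEmeas : ∀ N : ℕ, Measurable (fun z => G z - min (G z) (N : ℝ)) :=
      fun N => hGmeas.sub (hGmeas.min measurable_const)
    have hEtend : Tendsto E atTop (nhds 0) := by
      have h0 : (0 : ℝ) = ∫ z : Circle, (0 : ℝ) ∂μ := by simp
      rw [h0]
      refine tendsto_integral_of_dominated_convergence G
        (fun N => (hEmeas N).aestronglyMeasurable) hGint
        (fun N => Eventually.of_forall fun z => ?_)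
        (Eventually.of_forall fun z => ?_)
      · rw [Real.norm_eq_abs, abs_of_nonneg (by simp [hG0 z] : (0:ℝ) ≤ G z - min (G z) N)]
        have : 0 ≤ min (G z) (N : ℝ) := le_min (hG0 z) (Nat.cast_nonneg N)
        linarith
      · refine Tendsto.congr' ?_ tendsto_const_nhds
        filter_upwards [eventually_ge_atTop ⌈G z⌉₊] with N hN
        have : G z ≤ (N : ℝ) := le_trans (Nat.le_ceil _) (Nat.cast_le.2 hN)
        simp [min_eq_left this]
    have hE0 : ∀ N, 0 ≤ E N := by
      intro N
      refine integral_nonneg fun z => ?_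
      simp [hG0 z]
    obtain ⟨N, hN⟩ : ∃ N : ℕ, E N < ε / 2 := by
      rcases (hEtend.eventually (gt_mem_nhds (by linarith : (0:ℝ) < ε / 2))).exists with ⟨N, hN⟩
      exact ⟨N, hN⟩
    -- bounded truncated density
    set fN : Circle → ℂ := fun z => ((min (G z) N : ℝ) : ℂ) with hfNdef
    have hfNmeas : Measurable fN :=
      Complex.measurable_ofReal.comp (hGmeas.min measurable_const)
    have hfNbdd : ∃ M : ℝ, ∀ z, ‖fN z‖ ≤ M := by
      refine ⟨N, fun z => ?_⟩
      rw [hfNdef]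
      simp only [Complex.norm_real, Real.norm_eq_abs]
      rw [abs_of_nonneg (le_min (hG0 z) (Nat.cast_nonneg N))]
      exact min_le_right _ _
    have hμN := hμ fN hfNmeas hfNbdd
    filter_upwards [hμN.eventually (Metric.ball_mem_nhds (0:ℂ) (by linarith : (0:ℝ) < ε / 2))]
      with i hi
    rw [dist_zero_right] at hi
    -- decompose
    have hfNint : Integrable (fun z : Circle => (z : ℂ) ^ (n i) * fN z) μ := by
      obtain ⟨M, hM⟩ := hfNbdd
      refine Integrable.mono' (integrable_const M)
        (((circle_pow_measurable (n i)).mul hfNmeas).aestronglyMeasurable)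
        (Eventually.of_forall fun z => ?_)
      rw [norm_mul, circle_norm_pow, one_mul]; exact hM z
    have key : ∫ z, (z : ℂ) ^ (n i) ∂ρ
        = (∫ z, (z : ℂ) ^ (n i) * fN z ∂μ) + ∫ z, (z : ℂ) ^ (n i) * ((G z : ℂ) - fN z) ∂μ := by
      rw [hρint _ (circle_pow_measurable (n i)), ← integral_add hfNint]
      · refine integral_congr_ae (Eventually.of_forall fun z => ?_)
        ring
      · have : (fun z : Circle => (z : ℂ) ^ (n i) * ((G z : ℂ) - fN z))
            = fun z : Circle => (z : ℂ) ^ (n i) * (G z : ℂ) - (z : ℂ) ^ (n i) * fN z := by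
          funext z; ring
        rw [this]
        exact (hGmul_int (n i)).sub hfNint
    rw [key]
    have herr : ‖∫ z, (z : ℂ) ^ (n i) * ((G z : ℂ) - fN z) ∂μ‖ ≤ E N := by
      refine le_trans (norm_integral_le_integral_norm _) (le_of_eq ?_)
      refine integral_congr_ae (Eventually.of_forall fun z => ?_)
      show ‖(z : ℂ) ^ (n i) * ((G z : ℂ) - fN z)‖ = G z - min (G z) N
      rw [norm_mul, circle_norm_pow, one_mul, hfNdef]
      rw [← Complex.ofReal_sub, Complex.norm_real, Real.norm_eq_abs,
        abs_of_nonneg (by simp [hG0 z] : (0:ℝ) ≤ G z - min (G z) N)]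
    calc ‖(∫ z, (z : ℂ) ^ (n i) * fN z ∂μ) + ∫ z, (z : ℂ) ^ (n i) * ((G z : ℂ) - fN z) ∂μ‖
        ≤ ‖∫ z, (z : ℂ) ^ (n i) * fN z ∂μ‖ + ‖∫ z, (z : ℂ) ^ (n i) * ((G z : ℂ) - fN z) ∂μ‖ :=
          norm_add_le _ _
      _ < ε / 2 + ε / 2 := add_lt_add_of_lt_of_le hi (herr.trans hN.le)
      _ = ε := by ring
  -- Step 2 : ∫ ‖z^{n i} - 1‖² dρ → 0
  have hsq : Tendsto (fun i => ∫ z, ‖(z : ℂ) ^ (n i) - 1‖ ^ 2 ∂ρ) atTop (nhds 0) := by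
    have hle : ∀ i, ∫ z, ‖(z : ℂ) ^ (n i) - 1‖ ^ 2 ∂ρ ≤ ∫ z, ‖(z : ℂ) ^ (n i) - 1‖ ^ 2 ∂ν := by
      intro i
      refine integral_mono_measure hρle (Eventually.of_forall fun z => by positivity) ?_
      refine Integrable.mono' (integrable_const (4 : ℝ))
        ((((circle_pow_measurable (n i)).sub measurable_const).norm.pow_const 2).aestronglyMeasurable)
        (Eventually.of_forall fun z => ?_)
      rw [Real.norm_eq_abs, abs_of_nonneg (by positivity)]
      have h1 : ‖(z : ℂ) ^ (n i) - 1‖ ≤ 2 := by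
        calc ‖(z : ℂ) ^ (n i) - 1‖ ≤ ‖(z : ℂ) ^ (n i)‖ + ‖(1 : ℂ)‖ := norm_sub_le _ _
          _ = 2 := by rw [circle_norm_pow]; norm_num
      nlinarith [norm_nonneg ((z : ℂ) ^ (n i) - 1)]
    have h0 : ∀ i, 0 ≤ ∫ z, ‖(z : ℂ) ^ (n i) - 1‖ ^ 2 ∂ρ := fun i =>
      integral_nonneg fun z => by positivity
    exact tendsto_of_tendsto_of_tendsto_of_le_of_le tendsto_const_nhds hν h0 hle
  -- Step 3 : compute the integral
  have hcomp : ∀ i, ∫ z, ‖(z : ℂ) ^ (n i) - 1‖ ^ 2 ∂ρ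
      = 2 * (ρ Set.univ).toReal - 2 * (∫ z, (z : ℂ) ^ (n i) ∂ρ).re := by
    intro i
    have hre_int : Integrable (fun z : Circle => ((z : ℂ) ^ (n i)).re) ρ :=
      (hbdd_int (n i) ρ).re
    have heq : ∀ z : Circle, ‖(z : ℂ) ^ (n i) - 1‖ ^ 2 = 2 - 2 * ((z : ℂ) ^ (n i)).re :=
      fun z => norm_sq_sub_one_aux (circle_norm_pow z (n i))
    calc ∫ z, ‖(z : ℂ) ^ (n i) - 1‖ ^ 2 ∂ρ
        = ∫ z, (2 - 2 * ((z : ℂ) ^ (n i)).re) ∂ρ :=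
          integral_congr_ae (Eventually.of_forall fun z => heq z)
      _ = (∫ _z : Circle, (2:ℝ) ∂ρ) - ∫ z, 2 * ((z : ℂ) ^ (n i)).re ∂ρ :=
          integral_sub (integrable_const 2) (hre_int.const_mul 2)
      _ = 2 * (ρ Set.univ).toReal - 2 * (∫ z, (z : ℂ) ^ (n i) ∂ρ).re := by
          rw [integral_const, integral_const_mul]
          have h := integral_re (μ := ρ) (hbdd_int (n i) ρ)
          simp only [RCLike.re_to_complex] at h
          rw [h]
          simp [mul_comm, Measure.real]
  -- conclude
  have hlim2 : Tendsto (fun i => 2 * (ρ Set.univ).toReal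
      - 2 * (∫ z, (z : ℂ) ^ (n i) ∂ρ).re) atTop (nhds (2 * (ρ Set.univ).toReal)) := by
    have : Tendsto (fun i => (∫ z, (z : ℂ) ^ (n i) ∂ρ).re) atTop (nhds 0) := by
      have := (Complex.continuous_re.tendsto 0).comp hT
      simpa [Function.comp_def] using this
    have h2 := (this.const_mul (2:ℝ))
    have := (tendsto_const_nhds : Tendsto (fun _ : ℕ => 2 * (ρ Set.univ).toReal) atTop _).sub h2
    simpa using this
  have huniq : 2 * (ρ Set.univ).toReal = 0 := by
    have : Tendsto (fun i => 2 * (ρ Set.univ).toReal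
        - 2 * (∫ z, (z : ℂ) ^ (n i) ∂ρ).re) atTop (nhds 0) := by
      refine hsq.congr fun i => ?_
      rw [hcomp i]
    exact tendsto_nhds_unique hlim2 this
  have : (ρ Set.univ).toReal = 0 := by linarith
  have hρuniv : ρ Set.univ = 0 := by
    have hfin : ρ Set.univ ≠ ⊤ := measure_ne_top ρ _
    exact (ENNReal.toReal_eq_zero_iff _).1 this |>.resolve_right hfin
  exact Measure.measure_univ_eq_zero.1 hρuniv
end

section
/- If μ and ν are Borel probability measures on the unit circle and there exists a sequence (n_i) such that z^{n_i} converges weakly in L²(μ) to f and weakly in L²(ν) to g, with f(z) ≠ g(z) for all z in the circle, then μ and ν are mutually singular. -/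
open MeasureTheory Filter Complex
open scoped ENNReal NNReal

/-- If `μ` and `ν` are Borel probability measures on the unit circle and `z^{n i}`
converges weakly in `L²(μ)` to `f` and weakly in `L²(ν)` to `g`, with `f z ≠ g z`
for all `z`, then `μ` and `ν` are mutually singular. -/
theorem stmt4 (μ ν : Measure Circle) [IsProbabilityMeasure μ] [IsProbabilityMeasure ν]
    (n : ℕ → ℕ) (f g : Circle → ℂ) (hf : MemLp f 2 μ) (hg : MemLp g 2 ν)
    (hμw : ∀ h : Circle → ℂ, MemLp h 2 μ →
      Tendsto (fun i => ∫ z : Circle, (z : ℂ) ^ (n i) * (starRingEnd ℂ) (h z) ∂μ) atTop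
        (nhds (∫ z : Circle, f z * (starRingEnd ℂ) (h z) ∂μ)))
    (hνw : ∀ h : Circle → ℂ, MemLp h 2 ν →
      Tendsto (fun i => ∫ z : Circle, (z : ℂ) ^ (n i) * (starRingEnd ℂ) (h z) ∂ν) atTop
        (nhds (∫ z : Circle, g z * (starRingEnd ℂ) (h z) ∂ν)))
    (hfg : ∀ z : Circle, f z ≠ g z) :
    μ ⟂ₘ ν := by
  classical
  set w : Circle → ℝ≥0∞ := ν.rnDeriv μ with hw
  have hwmeas : Measurable w := Measure.measurable_rnDeriv ν μ
  set wn : Circle → ℝ≥0 := fun x => (w x).toNNReal with hwn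
  have hwnmeas : Measurable wn := hwmeas.ennreal_toNNReal
  set wR : Circle → ℝ := fun x => (w x).toReal with hwR
  have hwRmeas : Measurable wR := hwmeas.ennreal_toReal
  obtain ⟨S, hSm, hS1, hS2⟩ := Measure.mutuallySingular_singularPart ν μ
  -- hS1 : ν.singularPart μ S = 0, hS2 : μ Sᶜ = 0
  have hν : ν.singularPart μ + μ.withDensity w = ν := Measure.singularPart_add_rnDeriv ν μ
  have hwlt : ∀ᵐ x ∂μ, w x < ⊤ := Measure.rnDeriv_lt_top ν μ
  have hρeq : μ.withDensity w = μ.withDensity (fun x => (wn x : ℝ≥0∞)) :=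
    withDensity_congr_ae (hwlt.mono fun x hx => (ENNReal.coe_toNNReal hx.ne).symm)
  have hsing_le : ν.singularPart μ ≤ ν := Measure.singularPart_le ν μ
  have hρ_le : μ.withDensity w ≤ ν := Measure.withDensity_rnDeriv_le ν μ
  -- key integral identity
  have key : ∀ F : Circle → ℂ, Integrable F ν → (∀ᵐ x ∂(ν.singularPart μ), F x = 0) →
      ∫ x, F x ∂ν = ∫ x, wR x • F x ∂μ := by
    intro F hFint hF0
    have h1 : Integrable F (ν.singularPart μ) := hFint.mono_measure hsing_le
    have h2 : Integrable F (μ.withDensity w) := hFint.mono_measure hρ_le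
    rw [← hν, integral_add_measure h1 h2, integral_eq_zero_of_ae hF0, zero_add, hρeq,
      integral_withDensity_eq_integral_smul hwnmeas F]
    refine integral_congr_ae (Eventually.of_forall fun x => ?_)
    show wn x • F x = wR x • F x
    rw [NNReal.smul_def]
    rfl
  have keyInt : ∀ F : Circle → ℂ, Integrable F ν →
      Integrable (fun x => wR x • F x) μ := by
    intro F hFint
    have h2 : Integrable F (μ.withDensity w) := hFint.mono_measure hρ_le
    rw [hρeq] at h2
    have := (integrable_withDensity_iff_integrable_smul hwnmeas).mp h2
    refine this.congr (Eventually.of_forall fun x => ?_)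
    show wn x • F x = wR x • F x
    rw [NNReal.smul_def]
    rfl
  -- measurable representatives
  set f₀ : Circle → ℂ := hf.1.mk f with hf₀
  set g₀ : Circle → ℂ := hg.1.mk g with hg₀
  have hf₀meas : Measurable f₀ := hf.1.stronglyMeasurable_mk.measurable
  have hg₀meas : Measurable g₀ := hg.1.stronglyMeasurable_mk.measurable
  have hfae : f =ᵐ[μ] f₀ := hf.1.ae_eq_mk
  have hgae : g =ᵐ[ν] g₀ := hg.1.ae_eq_mk
  set d : Circle → ℂ := fun x => f₀ x - g₀ x with hd
  have hdmeas : Measurable d := hf₀meas.sub hg₀meas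
  -- the truncation sets
  set E : ℕ → Set Circle := fun m =>
    S ∩ {x | w x ≤ (m : ℝ≥0∞)} ∩ {x | ‖d x‖ ≤ (m : ℝ)} with hE
  have hEmeas : ∀ m, MeasurableSet (E m) := fun m =>
    ((hSm.inter (hwmeas measurableSet_Iic)).inter
      (measurableSet_le hdmeas.norm measurable_const))
  -- w x ≠ 0 → g x = g₀ x, μ-a.e.
  have hg0 : ∀ᵐ x ∂μ, w x ≠ 0 → g x = g₀ x := by
    set N : Set Circle := toMeasurable ν {x | g x ≠ g₀ x} with hN
    have hNm : MeasurableSet N := measurableSet_toMeasurable ν _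
    have hNν : ν N = 0 := by
      rw [hN, measure_toMeasurable]
      exact ae_iff.mp hgae
    have hNρ : (μ.withDensity w) N = 0 := le_antisymm (hNν ▸ hρ_le N) (zero_le)
    rw [withDensity_apply w hNm] at hNρ
    have := (setLIntegral_eq_zero_iff hNm hwmeas).mp hNρ
    filter_upwards [this] with x hx hwx
    by_contra hne
    exact hwx (hx (subset_toMeasurable ν _ hne))
  -- main estimate for each m
  have main : ∀ m : ℕ, ∀ᵐ x ∂μ,
      (E m).indicator (fun x => wR x * Complex.normSq (d x)) x = 0 := by
    intro m
    set h : Circle → ℂ := (E m).indicator d with hhdef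
    have hhmeas : Measurable h := hdmeas.indicator (hEmeas m)
    have hhbd : ∀ x, ‖h x‖ ≤ (m : ℝ) := by
      intro x
      rw [hhdef]
      by_cases hx : x ∈ E m
      · rw [Set.indicator_of_mem hx]; exact hx.2
      · rw [Set.indicator_of_notMem hx]; simp
    set k : Circle → ℂ := fun x => wR x • h x with hkdef
    have hkmeas : Measurable k := hwRmeas.smul hhmeas
    have hwRbd : ∀ x, x ∈ E m → wR x ≤ (m : ℝ) := by
      intro x hx
      have := hx.1.2
      simpa [hwR] using ENNReal.toReal_mono (by simp) this
    have hkbd : ∀ x, ‖k x‖ ≤ (m : ℝ) * (m : ℝ) := by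
      intro x
      rw [hkdef]
      by_cases hx : x ∈ E m
      · rw [norm_smul, Real.norm_eq_abs, _root_.abs_of_nonneg ENNReal.toReal_nonneg]
        exact mul_le_mul (hwRbd x hx) (hhbd x) (norm_nonneg _) (Nat.cast_nonneg m)
      · simp only [hhdef, Set.indicator_of_notMem hx, smul_zero, norm_zero]
        positivity
    have hmemν : MemLp h 2 ν :=
      MemLp.of_bound hhmeas.aestronglyMeasurable _ (Eventually.of_forall hhbd)
    have hmemμ : MemLp k 2 μ :=
      MemLp.of_bound hkmeas.aestronglyMeasurable _ (Eventually.of_forall hkbd)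
    -- h vanishes a.e. w.r.t. the singular part
    have hsingae : ∀ᵐ x ∂(ν.singularPart μ), x ∉ S := measure_eq_zero_iff_ae_notMem.mp hS1
    have hzeroS : ∀ x, x ∉ S → h x = 0 := by
      intro x hx
      rw [hhdef, Set.indicator_of_notMem (fun hmem => hx hmem.1.1)]
    -- conj of k
    have hconjk : ∀ x, (starRingEnd ℂ) (k x) = wR x • (starRingEnd ℂ) (h x) := by
      intro x
      simp [hkdef, Complex.real_smul, map_mul, Complex.conj_ofReal]
    -- continuity/measurability of z^n
    have hzcont : ∀ j : ℕ, Continuous fun z : Circle => (z : ℂ) ^ j := fun j =>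
      (continuous_induced_dom.comp continuous_id).pow j
    have hznorm : ∀ j : ℕ, ∀ z : Circle, ‖(z : ℂ) ^ j‖ = 1 := by
      intro j z
      rw [norm_pow, Circle.norm_coe, one_pow]
    -- Step A : the two integral sequences coincide
    have stepA : ∀ i, ∫ z : Circle, (z : ℂ) ^ (n i) * (starRingEnd ℂ) (h z) ∂ν
        = ∫ z : Circle, (z : ℂ) ^ (n i) * (starRingEnd ℂ) (k z) ∂μ := by
      intro i
      have hFmeas : AEStronglyMeasurable
          (fun z : Circle => (z : ℂ) ^ (n i) * (starRingEnd ℂ) (h z)) ν :=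
        ((hzcont (n i)).aestronglyMeasurable).mul
          (Complex.continuous_conj.measurable.comp hhmeas).aestronglyMeasurable
      have hFbd : ∀ z : Circle, ‖(z : ℂ) ^ (n i) * (starRingEnd ℂ) (h z)‖ ≤ (m : ℝ) := by
        intro z
        rw [norm_mul, hznorm, one_mul, starRingEnd_apply, norm_star]
        exact hhbd z
      have hFint : Integrable (fun z : Circle => (z : ℂ) ^ (n i) * (starRingEnd ℂ) (h z)) ν :=
        memLp_one_iff_integrable.mp
          (MemLp.of_bound hFmeas _ (Eventually.of_forall hFbd))
      rw [key _ hFint (hsingae.mono fun x hx => by rw [hzeroS x hx, map_zero, mul_zero])]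
      refine integral_congr_ae (Eventually.of_forall fun x => ?_)
      show wR x • ((x : ℂ) ^ (n i) * (starRingEnd ℂ) (h x)) = (x : ℂ) ^ (n i) * (starRingEnd ℂ) (k x)
      rw [hconjk, mul_smul_comm]
    -- Step B : limits agree
    have hlim1 := hνw h hmemν
    have hlim2 := hμw k hmemμ
    rw [tendsto_congr stepA] at hlim1
    have hBeq : ∫ z : Circle, g z * (starRingEnd ℂ) (h z) ∂ν
        = ∫ z : Circle, f z * (starRingEnd ℂ) (k z) ∂μ :=
      tendsto_nhds_unique hlim1 hlim2
    -- Step C : rewrite the ν-integral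
    have hgint : Integrable g ν := hg.integrable one_le_two
    have hGint : Integrable (fun z : Circle => g z * (starRingEnd ℂ) (h z)) ν := by
      have := hgint.bdd_mul (c := (m : ℝ))
          (Complex.continuous_conj.measurable.comp hhmeas).aestronglyMeasurable
          (Eventually.of_forall fun x => by simp only [Function.comp_apply, starRingEnd_apply, norm_star]; exact hhbd x)
      exact this.congr (Eventually.of_forall fun x => by simp [Function.comp_apply, mul_comm])
    have stepC : ∫ z : Circle, g z * (starRingEnd ℂ) (h z) ∂ν
        = ∫ x, wR x • (g x * (starRingEnd ℂ) (h x)) ∂μ :=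
      key _ hGint (hsingae.mono fun x hx => by rw [hzeroS x hx, map_zero, mul_zero])
    -- Step D : rewrite the μ-integral
    have stepD : ∫ z : Circle, f z * (starRingEnd ℂ) (k z) ∂μ
        = ∫ x, wR x • (f x * (starRingEnd ℂ) (h x)) ∂μ := by
      refine integral_congr_ae (Eventually.of_forall fun x => ?_)
      show f x * (starRingEnd ℂ) (k x) = wR x • (f x * (starRingEnd ℂ) (h x))
      rw [hconjk, mul_smul_comm]
    have hEq : ∫ x, wR x • (g x * (starRingEnd ℂ) (h x)) ∂μ
        = ∫ x, wR x • (f x * (starRingEnd ℂ) (h x)) ∂μ := by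
      rw [← stepC, hBeq, stepD]
    -- integrability of both integrands over μ
    have hI1 : Integrable (fun x => wR x • (g x * (starRingEnd ℂ) (h x))) μ :=
      keyInt _ hGint
    have hI2 : Integrable (fun x => wR x • (f x * (starRingEnd ℂ) (h x))) μ := by
      have hfint : Integrable f μ := hf.integrable one_le_two
      have h1 : Integrable (fun x => (wR x • (starRingEnd ℂ) (h x)) * f x) μ :=
        hfint.bdd_mul (c := (m : ℝ) * (m : ℝ)) ((hwRmeas.smul
            (Complex.continuous_conj.measurable.comp hhmeas)).aestronglyMeasurable)
          (Eventually.of_forall fun x => by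
            rw [← hconjk, starRingEnd_apply, norm_star]
            exact hkbd x)
      refine h1.congr (Eventually.of_forall fun x => ?_)
      show (wR x • (starRingEnd ℂ) (h x)) * f x = wR x • (f x * (starRingEnd ℂ) (h x))
      rw [smul_mul_assoc, mul_comm]
    have hzero : ∫ x, wR x • ((g x - f x) * (starRingEnd ℂ) (h x)) ∂μ = 0 := by
      have : (fun x => wR x • ((g x - f x) * (starRingEnd ℂ) (h x)))
          = fun x => wR x • (g x * (starRingEnd ℂ) (h x))
              - wR x • (f x * (starRingEnd ℂ) (h x)) := by
        funext x; rw [← smul_sub, ← sub_mul]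
      rw [this, integral_sub hI1 hI2, hEq, sub_self]
    -- replace f, g by f₀, g₀
    have hzero' : ∫ x, wR x • ((g₀ x - f₀ x) * (starRingEnd ℂ) (h x)) ∂μ = 0 := by
      rw [← hzero]
      refine integral_congr_ae ?_
      filter_upwards [hfae, hg0] with x hfx hgx
      by_cases hwx : w x = 0
      · simp [hwR, hwx]
      · rw [hfx, hgx hwx]
    -- identify the integrand with the nonnegative indicator function
    set φ : Circle → ℝ := (E m).indicator (fun x => wR x * Complex.normSq (d x)) with hφdef
    have hint_eq : (fun x => wR x • ((g₀ x - f₀ x) * (starRingEnd ℂ) (h x)))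
        = fun x => -((φ x : ℝ) : ℂ) := by
      funext x
      rw [hφdef, hhdef]
      by_cases hx : x ∈ E m
      · rw [Set.indicator_of_mem hx, Set.indicator_of_mem hx]
        have : (g₀ x - f₀ x) = -(d x) := by rw [hd]; ring
        rw [this, neg_mul, Complex.mul_conj, Complex.real_smul]
        push_cast
        ring
      · rw [Set.indicator_of_notMem hx, Set.indicator_of_notMem hx]
        simp
    have hφint : Integrable φ μ := by
      refine memLp_one_iff_integrable.mp
        (MemLp.of_bound ((hwRmeas.mul
          (Complex.continuous_normSq.measurable.comp hdmeas)).indicator (hEmeas m)).aestronglyMeasurable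
          ((m : ℝ) * ((m : ℝ) * (m : ℝ))) (Eventually.of_forall fun x => ?_))
      rw [hφdef]
      by_cases hx : x ∈ E m
      · rw [Set.indicator_of_mem hx, Real.norm_eq_abs,
          _root_.abs_of_nonneg (mul_nonneg ENNReal.toReal_nonneg (Complex.normSq_nonneg _))]
        have h1 : Complex.normSq (d x) ≤ (m : ℝ) * (m : ℝ) := by
          rw [Complex.normSq_eq_norm_sq, sq]
          exact mul_le_mul hx.2 hx.2 (norm_nonneg _) (Nat.cast_nonneg m)
        exact mul_le_mul (hwRbd x hx) h1 (Complex.normSq_nonneg _) (Nat.cast_nonneg m)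
      · rw [Set.indicator_of_notMem hx, norm_zero]
        positivity
    have hφnn : 0 ≤ φ := by
      intro x
      simp only [Pi.zero_apply]
      rw [hφdef]
      by_cases hx : x ∈ E m
      · rw [Set.indicator_of_mem hx]
        exact mul_nonneg ENNReal.toReal_nonneg (Complex.normSq_nonneg _)
      · rw [Set.indicator_of_notMem hx]
    have hφ0 : ∫ x, φ x ∂μ = 0 := by
      have h0 : ∫ x, ((φ x : ℝ) : ℂ) ∂μ = 0 := by
        rw [← neg_eq_zero, ← integral_neg, ← hint_eq, hzero']
      have h2 : ∫ x, ((φ x : ℝ) : ℂ) ∂μ = ((∫ x, φ x ∂μ : ℝ) : ℂ) := integral_ofReal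
      rw [h2] at h0
      exact_mod_cast h0
    exact (integral_eq_zero_iff_of_nonneg hφnn hφint).mp hφ0
  -- combine everything
  have hae : ∀ᵐ x ∂μ, w x = 0 := by
    have hSea : ∀ᵐ x ∂μ, x ∈ S := by
      have := measure_eq_zero_iff_ae_notMem.mp hS2
      filter_upwards [this] with x hx
      simpa using hx
    filter_upwards [ae_all_iff.mpr main, hwlt, hSea, hfae, hg0] with x hx hxlt hxS hfx hgx
    by_contra hwne
    obtain ⟨m₁, hm₁⟩ := exists_nat_ge (w x).toReal
    obtain ⟨m₂, hm₂⟩ := exists_nat_ge ‖d x‖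
    set m := max m₁ m₂ with hm
    have hwle : w x ≤ (m : ℝ≥0∞) := by
      rw [← ENNReal.ofReal_natCast]
      exact (ENNReal.le_ofReal_iff_toReal_le hxlt.ne (Nat.cast_nonneg m)).mpr
        (le_trans hm₁ (by exact_mod_cast Nat.le_max_left m₁ m₂))
    have hdle : ‖d x‖ ≤ (m : ℝ) :=
      le_trans hm₂ (by exact_mod_cast Nat.le_max_right m₁ m₂)
    have hxE : x ∈ E m := ⟨⟨hxS, hwle⟩, hdle⟩
    have := hx m
    rw [Set.indicator_of_mem hxE] at this
    have hwRne : wR x ≠ 0 := by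
      rw [hwR]
      simp only [ne_eq, ENNReal.toReal_eq_zero_iff]
      push_neg
      exact ⟨hwne, hxlt.ne⟩
    have hnsq : Complex.normSq (d x) = 0 := by
      rcases mul_eq_zero.mp this with h' | h'
      · exact absurd h' hwRne
      · exact h'
    have hd0 : d x = 0 := Complex.normSq_eq_zero.mp hnsq
    have : f₀ x = g₀ x := sub_eq_zero.mp hd0
    exact hfg x (by rw [hfx, hgx hwne, ← this])
  -- conclude
  have hwd0 : μ.withDensity w = 0 := by
    have h1 : μ.withDensity w = μ.withDensity 0 := withDensity_congr_ae hae
    rw [h1, withDensity_zero]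
  have hνeq : ν = ν.singularPart μ := by
    conv_lhs => rw [← hν]
    rw [hwd0, add_zero]
  have := Measure.mutuallySingular_singularPart ν μ
  rw [← hνeq] at this
  exact this.symm
end
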